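/- Let G = (ℤ/6)⁵ and let K ⊆ G be the 6-element set consisting of the columns of the matrix with rows (0,0,2,2,4,4), (0,2,0,4,4,2), (0,2,4,0,2,4), (0,4,4,2,0,2), (0,4,2,4,2,0). Then K does not tile G by translation. -/
import Mathlib

set_option maxRecDepth 10000

/-- In `G = (ℤ/6)⁵`, the 6-element set `K` given by the columns of the
stated matrix does not tile `G` by translation. -/
theorem stmt11 :
    let G := Fin 5 → ZMod 6
    let K : Finset G :=
      {![0,0,0,0,0], ![0,2,2,4,4], ![2,0,4,4,2], ![2,4,0,2,4], ![4,4,2,0,2], ![4,2,4,2,0]}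
    ¬ ∃ T : Finset G, ∀ g : G, ∃! p : G × G, p.1 ∈ K ∧ p.2 ∈ T ∧ p.1 + p.2 = g := by
  intro G K
  rintro ⟨T, hT⟩
  -- the reduction mod 2
  let f : ZMod 6 →+* ZMod 2 := ZMod.castHom (show 2 ∣ 6 by norm_num) (ZMod 2)
  -- the even subgroup (as a finset): 3^5 = 243 elements
  let S : Finset G := Fintype.piFinset (fun _ => Finset.univ.filter (fun x => f x = 0))
  have h3 : (Finset.univ.filter (fun x : ZMod 6 => f x = 0)).card = 3 := by decide
  have hScard : S.card = 243 := by
    rw [show S = Fintype.piFinset (fun _ : Fin 5 => Finset.univ.filter (fun x => f x = 0)) from rfl,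
      Fintype.card_piFinset]
    simp [h3]
  have hKeven : ∀ k ∈ K, ∀ i, f (k i) = 0 := by
    intro k hk
    fin_cases hk <;> intro i <;> fin_cases i <;> decide
  have hKcard : K.card = 6 := by decide
  -- translates in T that are even
  let T₀ : Finset G := T.filter (fun t => ∀ i, f (t i) = 0)
  have key : (K ×ˢ T₀).card = S.card := by
    apply Finset.card_bij (fun p _ => p.1 + p.2)
    · rintro ⟨k, t⟩ hp
      simp only [Finset.mem_product, Finset.mem_filter, T₀] at hp
      rw [Fintype.mem_piFinset]
      intro i
      simp only [Finset.mem_filter, Finset.mem_univ, true_and]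
      show f (k i + t i) = 0
      rw [map_add, hKeven k hp.1 i, hp.2.2 i, add_zero]
    · rintro ⟨k, t⟩ hp ⟨k', t'⟩ hp' h
      simp only [Finset.mem_product, Finset.mem_filter, T₀] at hp hp'
      obtain ⟨q, -, hq⟩ := hT (k + t)
      have e1 := hq (k, t) ⟨hp.1, hp.2.1, rfl⟩
      have e2 := hq (k', t') ⟨hp'.1, hp'.2.1, h.symm⟩
      exact e1.trans e2.symm
    · intro g hg
      rw [Fintype.mem_piFinset] at hg
      simp only [Finset.mem_filter, Finset.mem_univ, true_and] at hg
      obtain ⟨⟨k, t⟩, ⟨hk, ht, hkt⟩, -⟩ := hT g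
      refine ⟨(k, t), ?_, hkt⟩
      simp only [Finset.mem_product, Finset.mem_filter, T₀]
      refine ⟨hk, ht, fun i => ?_⟩
      have : f (k i) + f (t i) = 0 := by
        rw [← map_add]
        have : k i + t i = g i := congrFun hkt i
        rw [this, hg i]
      have hk0 := hKeven k hk i
      rw [hk0, zero_add] at this
      exact this
  rw [Finset.card_product, hKcard, hScard] at key
  omega
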